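/- arXiv:2512.11355 — 2 statements merged into one kernel-verified Lean document; each statement's English description precedes it below -/
import Mathlib

section
/- Let d be a squarefree positive integer, K = ℚ(√−d) the imaginary quadratic field inside ℂ, 𝒪_K its ring of integers, and q(x,y) = Tr_{K/ℚ}(x·ȳ) the trace form (an even positive definite bilinear form on 𝒪_K). Then there exists a primitive isometric embedding of (𝒪_K, q) into U ⊕ U: that is, an injective ℤ-linear map f : 𝒪_K → ℤ⁴ such that B(f(x), f(y)) = q(x,y) for all x, y ∈ 𝒪_K, where B is the bilinear form on ℤ⁴ with Gram matrix the block-diagonal matrix with two blocks [[0,1],[1,0]], and such that the quotient ℤ⁴ / f(𝒪_K) is torsion-free. -/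
open Matrix

/-- The Gram matrix of `U ⊕ U`, where `U` is the hyperbolic plane. -/
def hyperbolicUU : Matrix (Fin 4) (Fin 4) ℤ :=
  !![0, 1, 0, 0;
     1, 0, 0, 0;
     0, 0, 0, 1;
     0, 0, 1, 0]

/-- **Primitive embedding of the ring of integers of an imaginary quadratic field into
`U ⊕ U`.**  Let `d` be a squarefree positive integer, `K = ℚ(√-d)` (an abstract number
field of degree 2 over `ℚ` containing `ω` with `ω ^ 2 = -d`), `σ` the nontrivial Galois
automorphism (complex conjugation, `σ ω = -ω`), and `q(x, y) = Tr_{K/ℚ}(x * σ y)` the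
trace form on `𝒪_K`.  Then there is a primitive isometric embedding of `(𝒪_K, q)` into
`U ⊕ U`: an injective `ℤ`-linear map `f : 𝒪_K → ℤ⁴` such that `B(f x, f y) = q(x, y)`
for all `x, y`, where `B` is the bilinear form with Gram matrix `hyperbolicUU`, and such
that the cokernel of `f` is torsion-free. -/
theorem ringOfIntegers_primitively_embeds_in_UU
    (d : ℕ) (hd : Squarefree d) (hd0 : 0 < d)
    (K : Type) [Field K] [NumberField K]
    (hdeg : Module.finrank ℚ K = 2)
    (ω : K) (hω : ω ^ 2 = -(d : K))
    (σ : K ≃ₐ[ℚ] K) (hσ : σ ω = -ω) :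
    ∃ f : NumberField.RingOfIntegers K →ₗ[ℤ] (Fin 4 → ℤ),
      Function.Injective f ∧
      (∀ x y : NumberField.RingOfIntegers K,
        ((f x ⬝ᵥ hyperbolicUU.mulVec (f y) : ℤ) : ℚ) =
          Algebra.trace ℚ K ((x : K) * σ (y : K))) ∧
      (∀ (n : ℤ) (v : Fin 4 → ℤ), n ≠ 0 →
        n • v ∈ LinearMap.range f → v ∈ LinearMap.range f) := by
  classical
  have hdQ : (0:ℚ) < d := by exact_mod_cast hd0
  have hinj : Function.Injective (algebraMap ℚ K) := (algebraMap ℚ K).injective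
  have hωnr : ∀ r : ℚ, algebraMap ℚ K r ≠ ω := by
    intro r hr
    have h2 : algebraMap ℚ K (r ^ 2) = algebraMap ℚ K (-(d : ℚ)) := by
      rw [map_pow, hr, hω]; push_cast; ring
    have := hinj h2
    nlinarith [sq_nonneg r]
  have hli : LinearIndependent ℚ ![(1 : K), ω] := by
    rw [LinearIndependent.pair_iff]
    intro s t hst
    rcases eq_or_ne t 0 with h | h
    · subst h
      simp only [smul_eq_mul, mul_one, zero_smul, add_zero] at hst
      simp [show s = 0 by simpa using hst]
    · exfalso
      apply hωnr (-s / t)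
      have ht' : ((t:ℚ):K) ≠ 0 := by exact_mod_cast h
      have hst' : ((s:ℚ):K) * 1 + ((t:ℚ):K) * ω = 0 := by
        simpa [Rat.smul_def] using hst
      rw [Algebra.algebraMap_eq_smul_one, Rat.smul_def, mul_one]
      push_cast
      rw [div_eq_iff ht']
      linear_combination -hst'
  obtain ⟨e, hecoe⟩ : ∃ e : Module.Basis (Fin 2) ℚ K, ∀ i, e i = ![(1:K), ω] i :=
    ⟨basisOfLinearIndependentOfCardEqFinrank hli (by simp [hdeg]), fun i => by
      rw [coe_basisOfLinearIndependentOfCardEqFinrank]⟩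
  have L1 : ∀ x : K, ∃ p q : ℚ, x = algebraMap ℚ K p + q • ω := by
    intro x
    refine ⟨e.repr x 0, e.repr x 1, ?_⟩
    have h := e.sum_repr x
    rw [Fin.sum_univ_two, hecoe 0, hecoe 1] at h
    rw [Algebra.algebraMap_eq_smul_one]
    simpa using h.symm
  have hσs : ∀ (q : ℚ) (z : K), σ (q • z) = q • σ z := fun q z =>
    σ.toAlgHom.toLinearMap.map_smul q z
  have hσσ : ∀ z : K, σ (σ z) = z := by
    intro z
    obtain ⟨p, q, rfl⟩ := L1 z
    rw [map_add, map_add, AlgEquiv.commutes, AlgEquiv.commutes, hσs, hσ, smul_neg,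
      map_neg, hσs, hσ, smul_neg, neg_neg]
  have htrσ : ∀ z : K, Algebra.trace ℚ K (σ z) = Algebra.trace ℚ K z :=
    Algebra.trace_eq_of_algEquiv σ
  have htrω : Algebra.trace ℚ K ω = 0 := by
    have h := htrσ ω
    rw [hσ, map_neg] at h
    linarith
  -- integrality facts
  have hint : ∀ x : NumberField.RingOfIntegers K, IsIntegral ℤ (x : K) :=
    fun x => NumberField.RingOfIntegers.isIntegral_coe x
  have hσint : ∀ x : NumberField.RingOfIntegers K, IsIntegral ℤ (σ (x : K)) :=
    fun x => (hint x).map σ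
  have htrint : ∀ x y : NumberField.RingOfIntegers K,
      ∃ m : ℤ, Algebra.trace ℚ K ((x : K) * σ (y : K)) = m := by
    intro x y
    have hIT : IsIntegral ℤ (Algebra.trace ℚ K ((x : K) * σ (y : K))) :=
      Algebra.isIntegral_trace ((hint x).mul (hσint y))
    obtain ⟨m, hm⟩ := IsIntegrallyClosed.isIntegral_iff.mp hIT
    exact ⟨m, by rw [← hm]; simp⟩
  -- evenness of the diagonal
  have heven : ∀ x : NumberField.RingOfIntegers K,
      ∃ m : ℤ, Algebra.trace ℚ K ((x : K) * σ (x : K)) = 2 * m := by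
    intro x
    obtain ⟨p, q, hx⟩ := L1 (x : K)
    have hσx : σ (x : K) = algebraMap ℚ K p - q • ω := by
      rw [hx, map_add, AlgEquiv.commutes, hσs, hσ, smul_neg, ← sub_eq_add_neg]
    have hprod : (x : K) * σ (x : K) = algebraMap ℚ K (p ^ 2 + d * q ^ 2) := by
      rw [hσx, hx]
      have h1 : (q • ω) * (q • ω) = algebraMap ℚ K (-(d * q ^ 2)) := by
        rw [smul_mul_smul_comm, ← pow_two, ← pow_two, hω]
        rw [show (-(d : K) : K) = algebraMap ℚ K (-(d : ℚ)) by push_cast; ring]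
        rw [Algebra.smul_def, ← _root_.map_mul]
        congr 1; ring
      have h2 : (algebraMap ℚ K p + q • ω) * (algebraMap ℚ K p - q • ω)
          = algebraMap ℚ K p * algebraMap ℚ K p - (q • ω) * (q • ω) := by ring
      rw [h2, h1, ← _root_.map_mul, ← map_sub]
      congr 1; ring
    have hi : IsIntegral ℤ ((x : K) * σ (x : K)) := (hint x).mul (hσint x)
    rw [hprod] at hi
    obtain ⟨m, hm⟩ := IsIntegrallyClosed.isIntegral_iff.mp
      ((isIntegral_algebraMap_iff hinj).mp hi)
    have hm' : (m : ℚ) = p ^ 2 + d * q ^ 2 := by exact_mod_cast hm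
    refine ⟨m, ?_⟩
    rw [hprod, Algebra.trace_algebraMap, hdeg, ← hm']
    simp [nsmul_eq_mul]
  -- an integral basis
  have hcard : Fintype.card (Module.Free.ChooseBasisIndex ℤ (NumberField.RingOfIntegers K)) = 2 := by
    rw [← Module.finrank_eq_card_chooseBasisIndex, NumberField.RingOfIntegers.rank, hdeg]
  let b : Module.Basis (Fin 2) ℤ (NumberField.RingOfIntegers K) :=
    (Module.Free.chooseBasis ℤ (NumberField.RingOfIntegers K)).reindex
      (Fintype.equivFinOfCardEq hcard)
  -- Gram matrix entries
  obtain ⟨a, ha⟩ := heven (b 0)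
  obtain ⟨c, hc⟩ := heven (b 1)
  obtain ⟨u, hu⟩ := htrint (b 0) (b 1)
  have hsymm : ∀ x y : NumberField.RingOfIntegers K,
      Algebra.trace ℚ K ((x : K) * σ (y : K)) = Algebra.trace ℚ K ((y : K) * σ (x : K)) := by
    intro x y
    rw [← htrσ ((x : K) * σ (y : K)), _root_.map_mul, hσσ, mul_comm]
  have hu' : Algebra.trace ℚ K (((b 1) : K) * σ ((b 0) : K)) = u := by
    rw [hsymm]; exact hu
  -- expansion of the trace form
  have hexp : ∀ x y : NumberField.RingOfIntegers K,
      Algebra.trace ℚ K ((x : K) * σ (y : K)) =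
        (b.repr x 0 : ℚ) * (b.repr y 0 : ℚ) * (2 * a)
        + ((b.repr x 0 : ℚ) * (b.repr y 1 : ℚ) + (b.repr x 1 : ℚ) * (b.repr y 0 : ℚ)) * u
        + (b.repr x 1 : ℚ) * (b.repr y 1 : ℚ) * (2 * c) := by
    intro x y
    have hx : x = b.repr x 0 • b 0 + b.repr x 1 • b 1 := by
      have h := b.sum_repr x
      rw [Fin.sum_univ_two] at h
      exact h.symm
    have hy : y = b.repr y 0 • b 0 + b.repr y 1 • b 1 := by
      have h := b.sum_repr y
      rw [Fin.sum_univ_two] at h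
      exact h.symm
    set m := b.repr x 0
    set n := b.repr x 1
    set m' := b.repr y 0
    set n' := b.repr y 1
    have hxK : ((x : K)) = m • ((b 0 : K)) + n • ((b 1 : K)) := by
      rw [hx]; push_cast; rfl
    have hyK : ((y : K)) = m' • ((b 0 : K)) + n' • ((b 1 : K)) := by
      rw [hy]; push_cast; rfl
    have key : ∀ (r s : ℤ) (z w : K), Algebra.trace ℚ K ((r • z) * (s • w))
        = (r : ℚ) * (s : ℚ) * Algebra.trace ℚ K (z * w) := by
      intro r s z w
      rw [smul_mul_assoc, mul_smul_comm, smul_smul, map_zsmul, zsmul_eq_mul]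
      push_cast
      ring
    rw [hxK, hyK, map_add, map_zsmul, map_zsmul, add_mul, mul_add, mul_add,
      map_add, map_add, map_add, key, key, key, key, ha, hc, hu, hu']
    push_cast
    ring
  -- the embedding
  let F : NumberField.RingOfIntegers K →ₗ[ℤ] (Fin 4 → ℤ) :=
    { toFun := fun x => ![b.repr x 0, a * b.repr x 0 + u * b.repr x 1,
        b.repr x 1, c * b.repr x 1]
      map_add' := by
        intro x y
        funext j
        fin_cases j <;> simp <;> ring
      map_smul' := by
        intro r x
        have h0 : b.repr (r • x) 0 = r * b.repr x 0 := by
          rw [LinearEquiv.map_smul, Finsupp.smul_apply, smul_eq_mul]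
        have h1 : b.repr (r • x) 1 = r * b.repr x 1 := by
          rw [LinearEquiv.map_smul, Finsupp.smul_apply, smul_eq_mul]
        funext j
        fin_cases j
        · exact h0
        · show a * b.repr (r • x) 0 + u * b.repr (r • x) 1
            = r * (a * b.repr x 0 + u * b.repr x 1)
          rw [h0, h1]; ring
        · exact h1
        · show c * b.repr (r • x) 1 = r * (c * b.repr x 1)
          rw [h1]; ring }
  have hF : ∀ x, F x = ![b.repr x 0, a * b.repr x 0 + u * b.repr x 1,
      b.repr x 1, c * b.repr x 1] := fun _ => rfl
  have hF0 : ∀ x, F x 0 = b.repr x 0 := fun x => rfl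
  have hF1 : ∀ x, F x 1 = a * b.repr x 0 + u * b.repr x 1 := fun x => rfl
  have hF2 : ∀ x, F x 2 = b.repr x 1 := fun x => rfl
  have hF3 : ∀ x, F x 3 = c * b.repr x 1 := fun x => rfl
  have hB : ∀ v w : Fin 4 → ℤ, v ⬝ᵥ hyperbolicUU.mulVec w =
      v 0 * w 1 + v 1 * w 0 + v 2 * w 3 + v 3 * w 2 := by
    intro v w
    simp [hyperbolicUU, mulVec, dotProduct, Fin.sum_univ_four, Matrix.vecHead, Matrix.vecTail]
  refine ⟨F, ?_, ?_, ?_⟩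
  · -- injectivity
    intro x y hxy
    have h0 := congrFun hxy 0
    have h2 := congrFun hxy 2
    rw [hF0, hF0] at h0
    rw [hF2, hF2] at h2
    apply b.repr.injective
    ext i
    fin_cases i
    · exact h0
    · exact h2
  · -- isometry
    intro x y
    rw [hB, hF0, hF1, hF2, hF3, hF0, hF1, hF2, hF3, hexp]
    push_cast
    ring
  · -- primitivity
    intro n v hn hv
    obtain ⟨x, hx⟩ := hv
    have h0 : n * v 0 = b.repr x 0 := by
      have := congrFun hx 0; rw [hF0] at this; simpa using this.symm
    have h1 : n * v 1 = a * b.repr x 0 + u * b.repr x 1 := by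
      have := congrFun hx 1; rw [hF1] at this; simpa using this.symm
    have h2 : n * v 2 = b.repr x 1 := by
      have := congrFun hx 2; rw [hF2] at this; simpa using this.symm
    have h3 : n * v 3 = c * b.repr x 1 := by
      have := congrFun hx 3; rw [hF3] at this; simpa using this.symm
    refine ⟨v 0 • b 0 + v 2 • b 1, ?_⟩
    have hr0 : b.repr (v 0 • b 0 + v 2 • b 1) 0 = v 0 := by
      rw [map_add, LinearEquiv.map_smul, LinearEquiv.map_smul, Finsupp.add_apply,
        Finsupp.smul_apply, Finsupp.smul_apply, Module.Basis.repr_self, Module.Basis.repr_self]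
      simp [Finsupp.single_apply]
    have hr1 : b.repr (v 0 • b 0 + v 2 • b 1) 1 = v 2 := by
      rw [map_add, LinearEquiv.map_smul, LinearEquiv.map_smul, Finsupp.add_apply,
        Finsupp.smul_apply, Finsupp.smul_apply, Module.Basis.repr_self, Module.Basis.repr_self]
      simp [Finsupp.single_apply]
    funext j
    fin_cases j
    · show F _ 0 = v 0
      rw [hF0, hr0]
    · show F _ 1 = v 1
      rw [hF1, hr0, hr1]
      apply mul_left_cancel₀ hn
      linear_combination a * h0 + u * h2 - h1
    · show F _ 2 = v 2
      rw [hF2, hr1]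
    · show F _ 3 = v 3
      rw [hF3, hr1]
      apply mul_left_cancel₀ hn
      linear_combination c * h2 - h3
end

section
/- Let d be a squarefree positive integer, K = ℚ(√−d) the imaginary quadratic field inside ℂ, 𝒪_K its ring of integers, and q(x,y) = Tr_{K/ℚ}(x·ȳ) the trace form on 𝒪_K. Let L be the rank-22 lattice E8(−1) ⊕ E8(−1) ⊕ U ⊕ U ⊕ A2(−1), i.e. ℤ²² equipped with the bilinear form whose Gram matrix is block diagonal with two blocks equal to the negative of the Cartan matrix of E8, two blocks [[0,1],[1,0]], and one block [[−2,1],[1,−2]]. Then there exists an embedding of lattices (𝒪_K, q) ↪ L, i.e. an injective ℤ-linear map f : 𝒪_K → ℤ²² with B_L(f(x), f(y)) = q(x,y) for all x, y ∈ 𝒪_K. -/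
open Matrix

/-- The Gram matrix of the rank-22 lattice `E8(-1) ⊕ E8(-1) ⊕ U ⊕ U ⊕ A2(-1)`:
block diagonal with two blocks equal to the negative of the Cartan matrix of `E₈`
(indices `0..7` and `8..15`), two hyperbolic blocks `[[0,1],[1,0]]` (indices `16,17`
and `18,19`), and one block `[[-2,1],[1,-2]]` (indices `20,21`). -/
def gramL : Matrix (Fin 22) (Fin 22) ℤ := fun i j =>
  if h : (i : ℕ) < 8 ∧ (j : ℕ) < 8 then
    - CartanMatrix.E₈ ⟨(i : ℕ), h.1⟩ ⟨(j : ℕ), h.2⟩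
  else if h : 8 ≤ (i : ℕ) ∧ (i : ℕ) < 16 ∧ 8 ≤ (j : ℕ) ∧ (j : ℕ) < 16 then
    - CartanMatrix.E₈ ⟨(i : ℕ) - 8, by omega⟩ ⟨(j : ℕ) - 8, by omega⟩
  else if ((i : ℕ) = 16 ∧ (j : ℕ) = 17) ∨ ((i : ℕ) = 17 ∧ (j : ℕ) = 16) ∨
          ((i : ℕ) = 18 ∧ (j : ℕ) = 19) ∨ ((i : ℕ) = 19 ∧ (j : ℕ) = 18) then 1
  else if ((i : ℕ) = 20 ∧ (j : ℕ) = 20) ∨ ((i : ℕ) = 21 ∧ (j : ℕ) = 21) then -2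
  else if ((i : ℕ) = 20 ∧ (j : ℕ) = 21) ∨ ((i : ℕ) = 21 ∧ (j : ℕ) = 20) then 1
  else 0

def vec0 (a : ℤ) : Fin 22 → ℤ := Pi.single 16 1 + Pi.single 17 a
def vec1 (b c : ℤ) : Fin 22 → ℤ := Pi.single 17 b + Pi.single 18 1 + Pi.single 19 c

lemma vec0_single (a b c : ℤ) (i j : Fin 22) :
    Pi.single i b ⬝ᵥ gramL.mulVec (Pi.single j c) = b * (gramL i j * c) := by
  simp [Matrix.mulVec_single, single_dotProduct]
  exact Or.inl (mul_comm _ _)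

lemma vec00 (a : ℤ) : vec0 a ⬝ᵥ gramL.mulVec (vec0 a) = 2 * a := by
  simp only [vec0, Matrix.mulVec_add, dotProduct_add, add_dotProduct, vec0_single]
  norm_num [show gramL 16 16 = 0 from by decide, show gramL 16 17 = 1 from by decide,
    show gramL 17 16 = 1 from by decide, show gramL 17 17 = 0 from by decide]
  ring

lemma vec01 (a b c : ℤ) : vec0 a ⬝ᵥ gramL.mulVec (vec1 b c) = b := by
  simp only [vec0, vec1, Matrix.mulVec_add, dotProduct_add, add_dotProduct, vec0_single]
  norm_num [show gramL 16 17 = 1 from by decide, show gramL 16 18 = 0 from by decide,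
    show gramL 16 19 = 0 from by decide, show gramL 17 17 = 0 from by decide,
    show gramL 17 18 = 0 from by decide, show gramL 17 19 = 0 from by decide]

lemma vec10 (a b c : ℤ) : vec1 b c ⬝ᵥ gramL.mulVec (vec0 a) = b := by
  simp only [vec0, vec1, Matrix.mulVec_add, dotProduct_add, add_dotProduct, vec0_single]
  norm_num [show gramL 17 16 = 1 from by decide, show gramL 18 16 = 0 from by decide,
    show gramL 19 16 = 0 from by decide, show gramL 17 17 = 0 from by decide,
    show gramL 18 17 = 0 from by decide, show gramL 19 17 = 0 from by decide]

lemma vec11 (b c : ℤ) : vec1 b c ⬝ᵥ gramL.mulVec (vec1 b c) = 2 * c := by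
  simp only [vec1, Matrix.mulVec_add, dotProduct_add, add_dotProduct, vec0_single]
  norm_num [show gramL 17 17 = 0 from by decide, show gramL 17 18 = 0 from by decide,
    show gramL 17 19 = 0 from by decide, show gramL 18 17 = 0 from by decide,
    show gramL 18 18 = 0 from by decide, show gramL 18 19 = 1 from by decide,
    show gramL 19 17 = 0 from by decide, show gramL 19 18 = 1 from by decide,
    show gramL 19 19 = 0 from by decide]
  ring

/-- **Embedding of the ring of integers of an imaginary quadratic field into the lattice
`L = E8(-1) ⊕ E8(-1) ⊕ U ⊕ U ⊕ A2(-1)`.**  Let `d` be a squarefree positive integer,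
`K = ℚ(√-d)` (an abstract number field of degree 2 over `ℚ` containing `ω` with
`ω ^ 2 = -d`), `σ` the nontrivial Galois automorphism (complex conjugation, `σ ω = -ω`),
and `q(x, y) = Tr_{K/ℚ}(x * σ y)` the trace form on `𝒪_K`.  Then there is an embedding
of lattices `(𝒪_K, q) ↪ L`: an injective `ℤ`-linear map `f : 𝒪_K → ℤ²²` with
`B_L(f x, f y) = q(x, y)` for all `x, y`, where `B_L` has Gram matrix `gramL`. -/
theorem ringOfIntegers_embeds_in_L
    (d : ℕ) (hd : Squarefree d) (hd0 : 0 < d)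
    (K : Type) [Field K] [NumberField K]
    (hdeg : Module.finrank ℚ K = 2)
    (ω : K) (hω : ω ^ 2 = -(d : K))
    (σ : K ≃ₐ[ℚ] K) (hσ : σ ω = -ω) :
    ∃ f : NumberField.RingOfIntegers K →ₗ[ℤ] (Fin 22 → ℤ),
      Function.Injective f ∧
      ∀ x y : NumberField.RingOfIntegers K,
        ((f x ⬝ᵥ gramL.mulVec (f y) : ℤ) : ℚ) =
          Algebra.trace ℚ K ((x : K) * σ (y : K)) := by
  classical
  have hdK : (d : K) ≠ 0 := Nat.cast_ne_zero.2 hd0.ne'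
  have hω0 : ω ≠ 0 := by
    intro h
    apply hdK
    have h2 : (0:K)^2 = -(d:K) := h ▸ hω
    simpa using h2.symm
  -- linear independence of ![1, ω]
  have hli : LinearIndependent ℚ ![(1:K), ω] := by
    rw [linearIndependent_fin2]
    refine ⟨by simpa using hω0, fun a ha => ?_⟩
    have h2 : (a • ω) * (a • ω) = (1:K) := by rw [show a • ω = ![(1:K), ω] 0 from ha]; simp
    rw [smul_mul_smul_comm, ← pow_two ω, hω] at h2
    have h3 : algebraMap ℚ K (a * a * (d:ℚ)) = algebraMap ℚ K (-1) := by
      rw [_root_.map_mul, map_neg, _root_.map_one,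
        show ((algebraMap ℚ K) ((d:ℚ))) = ((d:K)) from by simp, ← Algebra.smul_def]
      rw [smul_neg] at h2
      exact neg_eq_iff_eq_neg.1 h2
    have h4 := (algebraMap ℚ K).injective h3
    nlinarith [mul_self_nonneg a, (by exact_mod_cast hd0 : (0:ℚ) < d)]
  have hcd : Fintype.card (Fin 2) = Module.finrank ℚ K := by simp [hdeg]
  let Bq : Module.Basis (Fin 2) ℚ K := basisOfLinearIndependentOfCardEqFinrank hli hcd
  have hBq0 : Bq 0 = 1 := by
    simp [Bq, coe_basisOfLinearIndependentOfCardEqFinrank]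
  have hBq1 : Bq 1 = ω := by
    simp [Bq, coe_basisOfLinearIndependentOfCardEqFinrank]
  have htr1 : Algebra.trace ℚ K 1 = 2 := by
    rw [show (1:K) = algebraMap ℚ K 1 from by simp, Algebra.trace_algebraMap, hdeg]
    norm_num
  have htrω : Algebra.trace ℚ K ω = 0 := by
    rw [Algebra.trace_eq_matrix_trace Bq, Matrix.trace_fin_two,
      Algebra.leftMulMatrix_eq_repr_mul, Algebra.leftMulMatrix_eq_repr_mul, hBq0, hBq1,
      mul_one,
      show ω * ω = ((-(d:ℚ)) • Bq 0) from by
        rw [hBq0]; push_cast [← pow_two ω, hω]; simp [Algebra.smul_def],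
      ← hBq1, Module.Basis.repr_self, _root_.map_smul, Module.Basis.repr_self]
    simp
  have σsmul : ∀ (c : ℚ) (z : K), σ (c • z) = c • σ z := fun c z => by
    rw [Algebra.smul_def, Algebra.smul_def, _root_.map_mul, AlgEquiv.commutes]
  have key : ∀ x : K, algebraMap ℚ K (Algebra.trace ℚ K x) = x + σ x := by
    intro x
    have hx := Bq.sum_repr x
    rw [Fin.sum_univ_two, hBq0, hBq1] at hx
    rw [← hx]
    have hσx : σ ((Bq.repr x) 0 • (1:K) + (Bq.repr x) 1 • ω)
        = (Bq.repr x) 0 • (1:K) - (Bq.repr x) 1 • ω := by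
      rw [map_add, σsmul, σsmul, hσ, smul_neg]
      simp [sub_eq_add_neg]
    rw [map_add (Algebra.trace ℚ K), _root_.map_smul, _root_.map_smul, htr1, htrω, smul_zero,
      add_zero, hσx, smul_eq_mul, Algebra.algebraMap_eq_smul_one]
    module
  have hσσ : ∀ x : K, σ (σ x) = x := by
    intro x
    have hx := Bq.sum_repr x
    rw [Fin.sum_univ_two, hBq0, hBq1] at hx
    rw [← hx]
    simp [map_add, σsmul, hσ]
  have hqinj : Function.Injective (algebraMap ℚ K) := (algebraMap ℚ K).injective
  have hIntEl : ∀ x : NumberField.RingOfIntegers K, IsIntegral ℤ (σ (x : K)) := fun x =>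
    IsIntegral.map σ.toAlgHom.toRingHom.toIntAlgHom (NumberField.RingOfIntegers.isIntegral_coe x)
  have hInt : ∀ x y : NumberField.RingOfIntegers K,
      ∃ m : ℤ, (m : ℚ) = Algebra.trace ℚ K ((x:K) * σ (y:K)) := by
    intro x y
    have hz : IsIntegral ℤ ((x:K) * σ (y:K)) :=
      (NumberField.RingOfIntegers.isIntegral_coe x).mul (hIntEl y)
    have hz2 : IsIntegral ℤ (σ ((x:K) * σ (y:K))) :=
      IsIntegral.map σ.toAlgHom.toRingHom.toIntAlgHom hz
    have h3 : IsIntegral ℤ (algebraMap ℚ K (Algebra.trace ℚ K ((x:K) * σ (y:K)))) := by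
      rw [key]; exact hz.add hz2
    obtain ⟨m, hm⟩ := IsIntegrallyClosed.isIntegral_iff.1 ((isIntegral_algebraMap_iff hqinj).1 h3)
    exact ⟨m, by simpa using hm⟩
  have hEven : ∀ x : NumberField.RingOfIntegers K,
      ∃ m : ℤ, ((2 * m : ℤ) : ℚ) = Algebra.trace ℚ K ((x:K) * σ (x:K)) := by
    intro x
    set t := Algebra.trace ℚ K ((x:K) * σ (x:K)) with ht
    have hzfix : σ ((x:K) * σ (x:K)) = (x:K) * σ (x:K) := by
      rw [_root_.map_mul, hσσ]; ring
    have h2 : algebraMap ℚ K t = 2 * ((x:K) * σ (x:K)) := by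
      rw [ht, key, hzfix]; ring
    have h3 : (x:K) * σ (x:K) = algebraMap ℚ K (t / 2) := by
      rw [map_div₀, h2, show ((algebraMap ℚ K) 2) = (2:K) from by norm_num]
      ring
    have hz : IsIntegral ℤ ((x:K) * σ (x:K)) :=
      (NumberField.RingOfIntegers.isIntegral_coe x).mul (hIntEl x)
    rw [h3] at hz
    obtain ⟨m, hm⟩ := IsIntegrallyClosed.isIntegral_iff.1 ((isIntegral_algebraMap_iff hqinj).1 hz)
    refine ⟨m, ?_⟩
    have hm' : (m : ℚ) = t / 2 := by simpa using hm
    push_cast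
    linarith [hm']
  have hSym : ∀ u v : K, Algebra.trace ℚ K (u * σ v) = Algebra.trace ℚ K (v * σ u) := by
    intro u v
    apply hqinj
    rw [key, key, _root_.map_mul, _root_.map_mul, hσσ, hσσ]
    ring
  have hrank : Module.finrank ℤ (NumberField.RingOfIntegers K) = 2 := by
    rw [NumberField.RingOfIntegers.rank, hdeg]
  have hcard :
      Fintype.card (Module.Free.ChooseBasisIndex ℤ (NumberField.RingOfIntegers K)) = 2 := by
    rw [← Module.finrank_eq_card_chooseBasisIndex, hrank]
  let Bz : Module.Basis (Fin 2) ℤ (NumberField.RingOfIntegers K) :=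
    (Module.Free.chooseBasis ℤ _).reindex (Fintype.equivFinOfCardEq hcard)
  obtain ⟨a, ha⟩ := hEven (Bz 0)
  obtain ⟨b, hb⟩ := hInt (Bz 0) (Bz 1)
  obtain ⟨c, hc⟩ := hEven (Bz 1)
  let v : Fin 2 → (Fin 22 → ℤ) := ![vec0 a, vec1 b c]
  let f : NumberField.RingOfIntegers K →ₗ[ℤ] (Fin 22 → ℤ) := Bz.constr ℤ v
  have hf : ∀ z, f z = Bz.repr z 0 • vec0 a + Bz.repr z 1 • vec1 b c := by
    intro z
    rw [show f z = (Bz.constr ℤ v) z from rfl, Module.Basis.constr_apply_fintype, Fin.sum_univ_two]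
    simp [v, Module.Basis.equivFun_apply]
  have hf16 : ∀ z, f z 16 = Bz.repr z 0 := by
    intro z
    rw [hf]
    simp [vec0, vec1, Pi.single_apply]
  have hf18 : ∀ z, f z 18 = Bz.repr z 1 := by
    intro z
    rw [hf]
    simp [vec0, vec1, Pi.single_apply]
  have hinj : Function.Injective f := by
    intro x y hxy
    have h0 : Bz.repr x 0 = Bz.repr y 0 := by
      have := congrFun hxy (16 : Fin 22); rwa [hf16, hf16] at this
    have h1 : Bz.repr x 1 = Bz.repr y 1 := by
      have := congrFun hxy (18 : Fin 22); rwa [hf18, hf18] at this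
    have hx := Bz.sum_repr x
    have hy := Bz.sum_repr y
    rw [Fin.sum_univ_two] at hx hy
    rw [← hx, ← hy, h0, h1]
  refine ⟨f, hinj, ?_⟩
  intro x y
  have hxK : (x:K) = (Bz.repr x 0) • ((Bz 0 : K)) + (Bz.repr x 1) • ((Bz 1 : K)) := by
    conv_lhs => rw [← Bz.sum_repr x]
    rw [Fin.sum_univ_two, NumberField.RingOfIntegers.coe_eq_algebraMap, map_add,
      map_zsmul, map_zsmul]
  have hyK : (y:K) = (Bz.repr y 0) • ((Bz 0 : K)) + (Bz.repr y 1) • ((Bz 1 : K)) := by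
    conv_lhs => rw [← Bz.sum_repr y]
    rw [Fin.sum_univ_two, NumberField.RingOfIntegers.coe_eq_algebraMap, map_add,
      map_zsmul, map_zsmul]
  have hRHS : Algebra.trace ℚ K ((x:K) * σ (y:K)) =
      (Bz.repr x 0 : ℚ) * ((Bz.repr y 0 : ℚ) * ((2 * a : ℤ) : ℚ))
      + (Bz.repr x 0 : ℚ) * ((Bz.repr y 1 : ℚ) * ((b : ℤ) : ℚ))
      + ((Bz.repr x 1 : ℚ) * ((Bz.repr y 0 : ℚ) * ((b : ℤ) : ℚ))
      + (Bz.repr x 1 : ℚ) * ((Bz.repr y 1 : ℚ) * ((2 * c : ℤ) : ℚ))) := by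
    rw [hxK, hyK, map_add σ, map_zsmul σ, map_zsmul σ]
    simp only [add_mul, mul_add, smul_mul_assoc, mul_smul_comm, map_add, map_zsmul]
    simp only [zsmul_eq_mul]
    rw [hSym ((Bz 1 : K)) ((Bz 0 : K)), ← ha, ← hb, ← hc]
    push_cast
    ring
  rw [hf x, hf y, hRHS]
  simp only [add_dotProduct, dotProduct_add, smul_dotProduct, dotProduct_smul,
    Matrix.mulVec_add, Matrix.mulVec_smul, vec00, vec01, vec10, vec11, smul_eq_mul]
  push_cast
  ring
end
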